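/- arXiv:math/0602427 — 4 statements merged into one kernel-verified Lean document; each statement's English description precedes it below -/
import Mathlib

section
/- Let f ∈ L²(ℝ;ℂ) and define F : [0,1) → [0,∞] by F(t) := Σ_{k∈ℤ} |f(t+k)|². Then for every finitely supported family (aₙ)_{n∈ℤ} of complex numbers, ∫_ℝ |Σ_{n∈ℤ} aₙ e^{2πint} f(t)|² dt = ∫_0^1 |Σ_{n∈ℤ} aₙ e^{2πint}|² F(t) dt. -/
open MeasureTheory Complex

noncomputable section

/-- The periodization `F(t) = ∑_{k ∈ ℤ} |f(t+k)|²`, with values in `[0,∞]`. -/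
def periodization (f : ℝ → ℂ) (t : ℝ) : ENNReal :=
  ∑' k : ℤ, (‖f (t + k)‖₊ : ENNReal) ^ 2

/-- For `f ∈ L²(ℝ;ℂ)` and every finitely supported family `(aₙ)_{n∈ℤ}` of
complex numbers,
`∫_ℝ |∑ₙ aₙ e^{2πint} f(t)|² dt = ∫₀¹ |∑ₙ aₙ e^{2πint}|² F(t) dt`,
where `F(t) = ∑_{k∈ℤ} |f(t+k)|²`. -/
theorem stochastic_datko_pazy_stmt7
    (f : ℝ → ℂ) (hf : MemLp f 2 volume) (s : Finset ℤ) (a : ℤ → ℂ) :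
    ∫⁻ t : ℝ, (‖∑ n ∈ s, a n * Complex.exp (2 * Real.pi * n * Complex.I * t) * f t‖₊
        : ENNReal) ^ 2
      = ∫⁻ t in Set.Ico (0 : ℝ) 1,
          ((‖∑ n ∈ s, a n * Complex.exp (2 * Real.pi * n * Complex.I * t)‖₊ : ENNReal) ^ 2)
            * periodization f t := by
  set P : ℝ → ℂ := fun t => ∑ n ∈ s, a n * Complex.exp (2 * Real.pi * n * Complex.I * t) with hPdef
  -- periodicity of P
  have hP : ∀ (t : ℝ) (k : ℤ), P (t + k) = P t := by
    intro t k
    simp only [hPdef]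
    refine Finset.sum_congr rfl fun n _ => ?_
    congr 1
    rw [show ((t + (k : ℝ) : ℝ) : ℂ) = (t : ℂ) + (k : ℂ) by push_cast; ring, mul_add,
      Complex.exp_add,
      show (2 * (Real.pi : ℂ) * n * Complex.I) * (k : ℂ) = ((n * k : ℤ) : ℂ) * (2 * Real.pi * Complex.I) by push_cast; ring,
      Complex.exp_int_mul_two_pi_mul_I, mul_one]
  have hPcont : Continuous P := by
    apply continuous_finset_sum
    intro n _
    exact continuous_const.mul (Complex.continuous_exp.comp (by continuity))
  -- rewrite the integrand
  have hintegrand : ∀ t : ℝ,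
      (‖∑ n ∈ s, a n * Complex.exp (2 * Real.pi * n * Complex.I * t) * f t‖₊ : ENNReal) ^ 2
        = (‖P t‖₊ : ENNReal) ^ 2 * (‖f t‖₊ : ENNReal) ^ 2 := by
    intro t
    rw [← Finset.sum_mul, nnnorm_mul]
    push_cast
    ring
  simp only [hintegrand]
  -- decompose ℝ into ⋃ k, Ico k (k+1)
  have hmeas : AEMeasurable (fun t : ℝ => (‖P t‖₊ : ENNReal) ^ 2 * (‖f t‖₊ : ENNReal) ^ 2)
      volume := by
    exact ((hPcont.measurable.nnnorm.coe_nnreal_ennreal.pow_const 2).aemeasurable.mul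
      ((hf.1.aemeasurable.nnnorm.coe_nnreal_ennreal).pow_const 2))
  have hcover : (⋃ k : ℤ, Set.Ico (k : ℝ) (k + 1)) = Set.univ := iUnion_Ico_intCast ℝ
  have hdisj : Pairwise (Function.onFun Disjoint fun k : ℤ => Set.Ico (k : ℝ) (k + 1)) :=
    Set.pairwise_disjoint_Ico_intCast ℝ
  have h1 : ∫⁻ t : ℝ, (‖P t‖₊ : ENNReal) ^ 2 * (‖f t‖₊ : ENNReal) ^ 2
      = ∑' k : ℤ, ∫⁻ t in Set.Ico (k : ℝ) (k + 1),
          (‖P t‖₊ : ENNReal) ^ 2 * (‖f t‖₊ : ENNReal) ^ 2 := by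
    rw [← lintegral_iUnion (fun k => measurableSet_Ico) hdisj, hcover,
      Measure.restrict_univ]
  -- translate each piece to [0,1)
  have h2 : ∀ k : ℤ, ∫⁻ t in Set.Ico (k : ℝ) (k + 1),
      (‖P t‖₊ : ENNReal) ^ 2 * (‖f t‖₊ : ENNReal) ^ 2
      = ∫⁻ t in Set.Ico (0 : ℝ) 1,
          (‖P t‖₊ : ENNReal) ^ 2 * (‖f (t + k)‖₊ : ENNReal) ^ 2 := by
    intro k
    have hmp : MeasurePreserving (fun x : ℝ => x + (k : ℝ)) volume volume :=
      measurePreserving_add_right volume _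
    have hemb : MeasurableEmbedding (fun x : ℝ => x + (k : ℝ)) :=
      (Homeomorph.addRight (k : ℝ)).measurableEmbedding
    have hpre : (fun x : ℝ => x + (k : ℝ)) ⁻¹' Set.Ico (k : ℝ) (k + 1)
        = Set.Ico (0 : ℝ) 1 := by
      ext x
      simp only [Set.mem_preimage, Set.mem_Ico]
      constructor <;> intro h <;> constructor <;> linarith [h.1, h.2]
    have := hmp.setLIntegral_comp_preimage_emb hemb
      (fun t => (‖P t‖₊ : ENNReal) ^ 2 * (‖f t‖₊ : ENNReal) ^ 2)
      (Set.Ico (k : ℝ) (k + 1))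
    rw [hpre] at this
    rw [← this]
    refine setLIntegral_congr_fun measurableSet_Ico ?_
    intro x _
    beta_reduce
    rw [hP x k]
  -- swap sum and integral
  have haemk : ∀ k : ℤ, AEMeasurable
      (fun t : ℝ => (‖P t‖₊ : ENNReal) ^ 2 * (‖f (t + k)‖₊ : ENNReal) ^ 2)
      (volume.restrict (Set.Ico (0 : ℝ) 1)) := by
    intro k
    have hq : Measure.QuasiMeasurePreserving (fun x : ℝ => x + (k : ℝ)) volume volume :=
      (measurePreserving_add_right volume _).quasiMeasurePreserving
    have hfk : AEMeasurable (fun t : ℝ => f (t + (k : ℝ))) volume :=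
      hf.1.aemeasurable.comp_quasiMeasurePreserving hq
    exact (((hPcont.measurable.nnnorm.coe_nnreal_ennreal.pow_const 2).aemeasurable.mul
      ((hfk.nnnorm.coe_nnreal_ennreal).pow_const 2))).restrict
  calc ∫⁻ t : ℝ, (‖P t‖₊ : ENNReal) ^ 2 * (‖f t‖₊ : ENNReal) ^ 2
      = ∑' k : ℤ, ∫⁻ t in Set.Ico (0 : ℝ) 1,
          (‖P t‖₊ : ENNReal) ^ 2 * (‖f (t + k)‖₊ : ENNReal) ^ 2 := by
        rw [h1]; exact tsum_congr h2
    _ = ∫⁻ t in Set.Ico (0 : ℝ) 1, ∑' k : ℤ,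
          (‖P t‖₊ : ENNReal) ^ 2 * (‖f (t + k)‖₊ : ENNReal) ^ 2 :=
        (lintegral_tsum haemk).symm
    _ = ∫⁻ t in Set.Ico (0 : ℝ) 1, (‖P t‖₊ : ENNReal) ^ 2 * periodization f t := by
        refine lintegral_congr fun t => ?_
        rw [periodization, ENNReal.tsum_mul_left]

end
end

section
/- Let f ∈ L²(ℝ;ℂ), define fₙ(t) := e^{2πint} f(t) for n ∈ ℤ, and let F(t) := Σ_{k∈ℤ} |f(t+k)|² for t ∈ [0,1). Then for every C > 0 the following are equivalent: (i) ‖Σ_{n∈ℤ} aₙ fₙ‖²_{L²(ℝ)} ≤ C² Σ_{n∈ℤ} |aₙ|² for every finitely supported family (aₙ)_{n∈ℤ} of complex numbers; (ii) ess sup_{t∈(0,1)} F(t) ≤ C². In particular, (fₙ)_{n∈ℤ} is a Hilbert sequence in L²(ℝ) if and only if ess sup_{t∈(0,1)} F(t) < ∞, and the optimal Hilbert constant C_H satisfies C_H² = ess sup_{t∈(0,1)} F(t). -/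
open MeasureTheory Complex Set

noncomputable section

/-- The modulated functions `fₙ(t) = e^{2πint} f(t)`. -/
def modulated (f : ℝ → ℂ) (n : ℤ) (t : ℝ) : ℂ :=
  Complex.exp (2 * Real.pi * n * Complex.I * t) * f t

/-- abbreviation for the trigonometric polynomial -/
def trigPoly (s : Finset ℤ) (a : ℤ → ℂ) (t : ℝ) : ℂ :=
  ∑ n ∈ s, a n * Complex.exp (2 * Real.pi * n * Complex.I * t)

lemma trigPoly_continuous (s : Finset ℤ) (a : ℤ → ℂ) : Continuous (trigPoly s a) := by
  unfold trigPoly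
  fun_prop

lemma sum_modulated (f : ℝ → ℂ) (s : Finset ℤ) (a : ℤ → ℂ) (t : ℝ) :
    ∑ n ∈ s, a n * modulated f n t = trigPoly s a t * f t := by
  simp only [modulated, trigPoly, Finset.sum_mul, mul_assoc]

lemma trigPoly_periodic (s : Finset ℤ) (a : ℤ → ℂ) (t : ℝ) (k : ℤ) :
    trigPoly s a (t + k) = trigPoly s a t := by
  unfold trigPoly
  refine Finset.sum_congr rfl fun n _ => ?_
  congr 1
  have : (2 * Real.pi * n * Complex.I * ((t + (k:ℝ) : ℝ)) : ℂ)
      = 2 * Real.pi * n * Complex.I * t + (n * k : ℤ) * (2 * Real.pi * Complex.I) := by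
    push_cast
    ring
  rw [this, Complex.exp_add, Complex.exp_int_mul_two_pi_mul_I, mul_one]

/-- unfolding of the real line into translates of (0,1] -/
lemma lintegral_eq_tsum_Ioc (G : ℝ → ENNReal) (hG : AEMeasurable G volume) :
    ∫⁻ t, G t = ∑' k : ℤ, ∫⁻ t in Ioc (0:ℝ) 1, G (t + k) := by
  have hcover : ∀ t : ℝ, ∑' k : ℤ, (Ioc (k:ℝ) (k+1)).indicator G t = G t := by
    intro t
    have hk : t ∈ Ioc ((⌈t⌉ - 1 : ℤ) : ℝ) (((⌈t⌉ - 1 : ℤ) : ℝ) + 1) := by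
      constructor
      · push_cast; linarith [Int.ceil_lt_add_one t]
      · push_cast; linarith [Int.le_ceil t]
    rw [tsum_eq_single (⌈t⌉ - 1 : ℤ)]
    · exact indicator_of_mem hk G
    · intro k hkne
      apply indicator_of_notMem
      intro hmem
      apply hkne
      have h1 : (k : ℝ) < t := hmem.1
      have h2 : t ≤ (k : ℝ) + 1 := hmem.2
      have : ⌈t⌉ = k + 1 := by
        rw [Int.ceil_eq_iff]
        constructor <;> push_cast <;> linarith
      omega
  calc ∫⁻ t, G t = ∫⁻ t, ∑' k : ℤ, (Ioc (k:ℝ) (k+1)).indicator G t := by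
        refine lintegral_congr fun t => (hcover t).symm
    _ = ∑' k : ℤ, ∫⁻ t, (Ioc (k:ℝ) (k+1)).indicator G t := by
        exact lintegral_tsum fun k => (hG.indicator measurableSet_Ioc)
    _ = ∑' k : ℤ, ∫⁻ t in Ioc (0:ℝ) 1, G (t + k) := by
        refine tsum_congr fun k => ?_
        have emb : MeasurableEmbedding (fun t : ℝ => t + (k : ℝ)) :=
          (MeasurableEquiv.addRight (k:ℝ)).measurableEmbedding
        have mp : MeasurePreserving (fun t : ℝ => t + (k : ℝ)) volume volume :=
          measurePreserving_add_right volume (k:ℝ)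
        rw [← mp.lintegral_comp_emb emb ((Ioc (k:ℝ) (k+1)).indicator G),
          ← lintegral_indicator measurableSet_Ioc]
        refine lintegral_congr fun t => ?_
        by_cases ht : t ∈ Ioc (0:ℝ) 1
        · rw [indicator_of_mem ht, indicator_of_mem (by constructor <;> [linarith [ht.1]; linarith [ht.2]])]
        · rw [indicator_of_notMem ht, indicator_of_notMem]
          intro hmem
          exact ht ⟨by linarith [hmem.1], by linarith [hmem.2]⟩

lemma key_identity (f : ℝ → ℂ) (hf : AEStronglyMeasurable f volume) (s : Finset ℤ) (a : ℤ → ℂ) :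
    ∫⁻ t, (‖∑ n ∈ s, a n * modulated f n t‖₊ : ENNReal) ^ 2
      = ∫⁻ t in Ioc (0:ℝ) 1, (‖trigPoly s a t‖₊ : ENNReal) ^ 2 * periodization f t := by
  have hP : AEMeasurable (fun t => (‖trigPoly s a t‖₊ : ENNReal) ^ 2) volume :=
    ((trigPoly_continuous s a).measurable.nnnorm.coe_nnreal_ennreal.pow_const 2).aemeasurable
  have hfm : AEMeasurable (fun t => (‖f t‖₊ : ENNReal) ^ 2) volume := hf.aemeasurable.nnnorm.coe_nnreal_ennreal.pow_const 2
  have hfk : ∀ k : ℤ, AEMeasurable (fun t => (‖f (t + (k:ℝ))‖₊ : ENNReal) ^ 2) volume := by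
    intro k
    exact hfm.comp_quasiMeasurePreserving (measurePreserving_add_right volume (k:ℝ)).quasiMeasurePreserving
  have hstep : ∀ t, (‖∑ n ∈ s, a n * modulated f n t‖₊ : ENNReal) ^ 2
      = (‖trigPoly s a t‖₊ : ENNReal) ^ 2 * (‖f t‖₊ : ENNReal) ^ 2 := by
    intro t
    rw [sum_modulated, nnnorm_mul, ENNReal.coe_mul, mul_pow]
  calc ∫⁻ t, (‖∑ n ∈ s, a n * modulated f n t‖₊ : ENNReal) ^ 2
      = ∫⁻ t, (‖trigPoly s a t‖₊ : ENNReal) ^ 2 * (‖f t‖₊ : ENNReal) ^ 2 :=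
        lintegral_congr hstep
    _ = ∑' k : ℤ, ∫⁻ t in Ioc (0:ℝ) 1,
          (‖trigPoly s a (t + (k:ℝ))‖₊ : ENNReal) ^ 2 * (‖f (t + (k:ℝ))‖₊ : ENNReal) ^ 2 :=
        lintegral_eq_tsum_Ioc _ (hP.mul hfm)
    _ = ∑' k : ℤ, ∫⁻ t in Ioc (0:ℝ) 1,
          (‖trigPoly s a t‖₊ : ENNReal) ^ 2 * (‖f (t + (k:ℝ))‖₊ : ENNReal) ^ 2 := by
        refine tsum_congr fun k => lintegral_congr fun t => ?_
        rw [trigPoly_periodic]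
    _ = ∫⁻ t in Ioc (0:ℝ) 1,
          ∑' k : ℤ, (‖trigPoly s a t‖₊ : ENNReal) ^ 2 * (‖f (t + (k:ℝ))‖₊ : ENNReal) ^ 2 :=
        (lintegral_tsum fun k => ((hP.restrict).mul ((hfk k).restrict))).symm
    _ = ∫⁻ t in Ioc (0:ℝ) 1, (‖trigPoly s a t‖₊ : ENNReal) ^ 2 * periodization f t := by
        refine lintegral_congr fun t => ?_
        rw [periodization, ENNReal.tsum_mul_left]

lemma integral_exp_Ioc (k : ℤ) :
    ∫ t in Ioc (0:ℝ) 1, Complex.exp (2 * Real.pi * k * Complex.I * t)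
      = if k = 0 then 1 else 0 := by
  rw [← intervalIntegral.integral_of_le (zero_le_one)]
  by_cases hk : k = 0
  · simp [hk]
  · have hc : (2 * Real.pi * k * Complex.I : ℂ) ≠ 0 := by
      simp [Real.pi_ne_zero, hk, Complex.I_ne_zero]
    have heq : ∀ t : ℝ, Complex.exp (2 * Real.pi * k * Complex.I * t)
        = Complex.exp ((2 * Real.pi * k * Complex.I) * (t:ℂ)) := fun t => rfl
    rw [if_neg hk]
    calc (∫ t in (0:ℝ)..1, Complex.exp (2 * Real.pi * k * Complex.I * t))
        = (Complex.exp ((2 * Real.pi * k * Complex.I) * (1:ℝ))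
            - Complex.exp ((2 * Real.pi * k * Complex.I) * (0:ℝ)))
            / (2 * Real.pi * k * Complex.I) := integral_exp_mul_complex hc
      _ = 0 := by
          have h1 : ((2 : ℂ) * Real.pi * k * Complex.I * ((1:ℝ):ℂ))
              = (k : ℂ) * (2 * Real.pi * Complex.I) := by push_cast; ring
          rw [h1, Complex.exp_int_mul_two_pi_mul_I]
          simp

lemma integral_trigPoly_sq (s : Finset ℤ) (a : ℤ → ℂ) :
    ∫ t in Ioc (0:ℝ) 1, ‖trigPoly s a t‖ ^ 2 = ∑ n ∈ s, ‖a n‖ ^ 2 := by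
  have expand : ∀ t : ℝ, ((‖trigPoly s a t‖ ^ 2 : ℝ) : ℂ)
      = ∑ m ∈ s, ∑ n ∈ s, (a m * (starRingEnd ℂ) (a n))
          * Complex.exp (2 * Real.pi * ((m - n : ℤ) : ℂ) * Complex.I * t) := by
    intro t
    have : ((‖trigPoly s a t‖ ^ 2 : ℝ) : ℂ)
        = trigPoly s a t * (starRingEnd ℂ) (trigPoly s a t) := by
      rw [RCLike.mul_conj]; norm_cast
    rw [this]
    unfold trigPoly
    rw [map_sum, Finset.sum_mul_sum]
    refine Finset.sum_congr rfl fun m _ => Finset.sum_congr rfl fun n _ => ?_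
    rw [map_mul, ← Complex.exp_conj]
    rw [mul_mul_mul_comm, ← Complex.exp_add]
    congr 1
    simp only [map_mul, Complex.conj_I, Complex.conj_ofReal, map_ofNat, map_intCast]
    push_cast
    ring
  have hint : ∀ (m n : ℤ), IntegrableOn (fun t : ℝ => (a m * (starRingEnd ℂ) (a n))
      * Complex.exp (2 * Real.pi * ((m - n : ℤ) : ℂ) * Complex.I * t)) (Ioc (0:ℝ) 1) volume := by
    intro m n
    apply Continuous.integrableOn_Ioc
    fun_prop
  have key : (∫ t in Ioc (0:ℝ) 1, ((‖trigPoly s a t‖ ^ 2 : ℝ) : ℂ))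
      = ((∑ n ∈ s, ‖a n‖ ^ 2 : ℝ) : ℂ) := by
    calc (∫ t in Ioc (0:ℝ) 1, ((‖trigPoly s a t‖ ^ 2 : ℝ) : ℂ))
        = ∫ t in Ioc (0:ℝ) 1, ∑ m ∈ s, ∑ n ∈ s, (a m * (starRingEnd ℂ) (a n))
            * Complex.exp (2 * Real.pi * ((m - n : ℤ) : ℂ) * Complex.I * t) := by
          exact integral_congr_ae (Filter.Eventually.of_forall expand)
      _ = ∑ m ∈ s, ∑ n ∈ s, (a m * (starRingEnd ℂ) (a n))
            * ∫ t in Ioc (0:ℝ) 1,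
              Complex.exp (2 * Real.pi * ((m - n : ℤ) : ℂ) * Complex.I * t) := by
          rw [integral_finset_sum _ fun m _ => integrable_finset_sum _ fun n _ => hint m n]
          exact Finset.sum_congr rfl fun m _ => by
            rw [integral_finset_sum _ fun n _ => hint m n]
            exact Finset.sum_congr rfl fun n _ => integral_const_mul _ _
      _ = ∑ m ∈ s, ∑ n ∈ s, (a m * (starRingEnd ℂ) (a n)) * (if m - n = 0 then 1 else 0) := by
          refine Finset.sum_congr rfl fun m _ => Finset.sum_congr rfl fun n _ => ?_
          rw [integral_exp_Ioc (m - n)]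
      _ = ∑ n ∈ s, (a n * (starRingEnd ℂ) (a n)) := by
          rw [Finset.sum_comm]
          refine Finset.sum_congr rfl fun n hn => ?_
          rw [Finset.sum_eq_single n]
          · simp
          · intro m hm hmn
            rw [if_neg (by omega), mul_zero]
          · intro hn'; exact absurd hn hn'
      _ = ((∑ n ∈ s, ‖a n‖ ^ 2 : ℝ) : ℂ) := by
          push_cast
          exact Finset.sum_congr rfl fun n _ => by rw [RCLike.mul_conj]; norm_cast
  have h2 := integral_ofReal (f := fun t => ‖trigPoly s a t‖ ^ 2)
            (μ := volume.restrict (Ioc (0:ℝ) 1)) (𝕜 := ℂ)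
  have key2 : ((∫ t in Ioc (0:ℝ) 1, ‖trigPoly s a t‖ ^ 2 : ℝ) : ℂ)
      = ((∑ n ∈ s, ‖a n‖ ^ 2 : ℝ) : ℂ) := by
    rw [show ((∫ t in Ioc (0:ℝ) 1, ‖trigPoly s a t‖ ^ 2 : ℝ) : ℂ)
      = ∫ t in Ioc (0:ℝ) 1, ((‖trigPoly s a t‖ ^ 2 : ℝ) : ℂ) from h2.symm]
    exact key
  exact_mod_cast key2

lemma coe_nnnorm_sq (z : ℂ) : ((‖z‖₊ : ENNReal)) ^ 2 = ENNReal.ofReal (‖z‖ ^ 2) := by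
  rw [← enorm_eq_nnnorm, ← ofReal_norm, ← ENNReal.ofReal_pow (norm_nonneg _)]

lemma lintegral_trigPoly_sq (s : Finset ℤ) (a : ℤ → ℂ) :
    ∫⁻ t in Ioc (0:ℝ) 1, (‖trigPoly s a t‖₊ : ENNReal) ^ 2
      = ∑ n ∈ s, (‖a n‖₊ : ENNReal) ^ 2 := by
  have hint : Integrable (fun t => ‖trigPoly s a t‖ ^ 2) (volume.restrict (Ioc (0:ℝ) 1)) := by
    apply Continuous.integrableOn_Ioc
    exact ((trigPoly_continuous s a).norm.pow 2)
  simp_rw [coe_nnnorm_sq]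
  rw [← ofReal_integral_eq_lintegral_ofReal hint (ae_of_all _ fun t => sq_nonneg _),
    integral_trigPoly_sq, ENNReal.ofReal_sum_of_nonneg fun n _ => sq_nonneg _]

lemma periodization_aemeasurable (f : ℝ → ℂ) (hf : AEStronglyMeasurable f volume) :
    AEMeasurable (periodization f) volume := by
  apply AEMeasurable.ennreal_tsum
  intro k
  exact (hf.aemeasurable.nnnorm.coe_nnreal_ennreal.pow_const 2).comp_quasiMeasurePreserving
    (measurePreserving_add_right volume (k:ℝ)).quasiMeasurePreserving

lemma hilbert_of_ae_le (f : ℝ → ℂ) (hf : AEStronglyMeasurable f volume) {c : ENNReal}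
    (hF : ∀ᵐ t ∂(volume.restrict (Ioc (0:ℝ) 1)), periodization f t ≤ c)
    (s : Finset ℤ) (a : ℤ → ℂ) :
    ∫⁻ t, (‖∑ n ∈ s, a n * modulated f n t‖₊ : ENNReal) ^ 2
      ≤ c * ∑ n ∈ s, (‖a n‖₊ : ENNReal) ^ 2 := by
  rw [key_identity f hf s a]
  have hPm : Measurable (fun t => (‖trigPoly s a t‖₊ : ENNReal) ^ 2) :=
    ((trigPoly_continuous s a).measurable.nnnorm.coe_nnreal_ennreal.pow_const 2)
  calc ∫⁻ t in Ioc (0:ℝ) 1, (‖trigPoly s a t‖₊ : ENNReal) ^ 2 * periodization f t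
      ≤ ∫⁻ t in Ioc (0:ℝ) 1, (‖trigPoly s a t‖₊ : ENNReal) ^ 2 * c := by
        refine lintegral_mono_ae ?_
        filter_upwards [hF] with t ht
        exact mul_le_mul_right ht _
    _ = (∫⁻ t in Ioc (0:ℝ) 1, (‖trigPoly s a t‖₊ : ENNReal) ^ 2) * c :=
        lintegral_mul_const _ hPm
    _ = c * ∑ n ∈ s, (‖a n‖₊ : ENNReal) ^ 2 := by
        rw [lintegral_trigPoly_sq, mul_comm]

lemma Lp_coeFn_finset_sum {μ : Measure (AddCircle (1:ℝ))} (s : Finset ℤ) (g : ℤ → Lp ℂ 2 μ) :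
    ⇑(∑ i ∈ s, g i) =ᵐ[μ] fun x => ∑ i ∈ s, g i x := by
  classical
  induction s using Finset.induction_on with
  | empty => simp only [Finset.sum_empty]; exact Lp.coeFn_zero ℂ 2 μ
  | insert _ _ hns ih =>
    rename_i n s'
    rw [Finset.sum_insert hns]
    filter_upwards [Lp.coeFn_add (g n) (∑ i ∈ s', g i), ih] with x hx1 hx2
    rw [hx1]
    simp only [Pi.add_apply, hx2, Finset.sum_insert hns]

lemma lintegral_nnnorm_sq_eq (μ : Measure (AddCircle (1:ℝ))) (g : Lp ℂ 2 μ) :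
    ∫⁻ x, (‖g x‖₊ : ENNReal) ^ 2 ∂μ = ENNReal.ofReal (‖g‖ ^ 2) := by
  have hN : eLpNorm (⇑g) 2 μ ≠ ⊤ := Lp.eLpNorm_ne_top g
  have h2 : eLpNorm (⇑g) 2 μ
      = (∫⁻ x, (‖g x‖₊ : ENNReal) ^ (2:ℝ) ∂μ) ^ (1/(2:ℝ)) := by
    rw [eLpNorm_eq_lintegral_rpow_enorm_toReal (by norm_num) (by norm_num)]
    norm_num
    rfl
  have h3 : ∫⁻ x, (‖g x‖₊ : ENNReal) ^ 2 ∂μ = (eLpNorm (⇑g) 2 μ) ^ (2:ℝ) := by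
    rw [h2, ← ENNReal.rpow_mul]
    norm_num
  rw [h3, Lp.norm_def, ENNReal.ofReal_pow ENNReal.toReal_nonneg,
    ENNReal.ofReal_toReal hN, ← ENNReal.rpow_natCast]
  norm_num

lemma tendsto_nnnorm_sq {g : ℕ → ℂ} {z : ℂ} (h : Filter.Tendsto g Filter.atTop (nhds z)) :
    Filter.Tendsto (fun k => (‖g k‖₊ : ENNReal) ^ 2) Filter.atTop (nhds ((‖z‖₊ : ENNReal) ^ 2)) :=
  ((ENNReal.continuous_pow 2).tendsto _).comp
    (ENNReal.tendsto_coe.2 ((continuous_nnnorm.tendsto z).comp h))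

lemma setLIntegral_periodization_le
    (f : ℝ → ℂ) (hf : AEStronglyMeasurable f volume) (C : ℝ)
    (H : ∀ (s : Finset ℤ) (a : ℤ → ℂ),
      ∫⁻ t : ℝ, (‖∑ n ∈ s, a n * modulated f n t‖₊ : ENNReal) ^ 2
        ≤ ENNReal.ofReal (C ^ 2) * ∑ n ∈ s, (‖a n‖₊ : ENNReal) ^ 2)
    (E : Set ℝ) (hE : MeasurableSet E) (hEsub : E ⊆ Ioc (0:ℝ) 1) :
    ∫⁻ t in E, periodization f t ≤ ENNReal.ofReal (C ^ 2) * volume E := by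
  classical
  haveI hfact : Fact ((0:ℝ) < 1) := ⟨zero_lt_one⟩
  have hvol : (volume : Measure (AddCircle (1:ℝ))) = AddCircle.haarAddCircle := by
    rw [AddCircle.volume_eq_smul_haarAddCircle]; simp
  have hmp : MeasurePreserving (fun t : ℝ => (t : AddCircle (1:ℝ)))
      (volume.restrict (Ioc (0:ℝ) 1)) AddCircle.haarAddCircle := by
    have h := AddCircle.measurePreserving_mk (1:ℝ) 0
    rw [zero_add] at h
    exact hvol ▸ h
  set χ : AddCircle (1:ℝ) → ℂ := AddCircle.liftIoc 1 0 (E.indicator 1) with hχdef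
  have hχcoe : ∀ t ∈ Ioc (0:ℝ) 1, χ ((t : ℝ) : AddCircle (1:ℝ)) = E.indicator 1 t := by
    intro t ht
    exact AddCircle.liftIoc_coe_apply (by rwa [zero_add])
  have hχmeas : Measurable χ := by
    have h1 : Measurable (E.indicator (1 : ℝ → ℂ)) := measurable_const.indicator hE
    exact (h1.comp measurable_subtype_coe).comp
      (AddCircle.measurableEquivIoc (1:ℝ) 0).measurable
  have hχbd : ∀ x, ‖χ x‖ ≤ 1 := by
    intro x
    simp only [hχdef, AddCircle.liftIoc, Function.comp_apply, Set.restrict]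
    rw [Set.domRestrict_apply, Set.indicator_apply]
    split_ifs <;> simp
  have hχLp : MemLp χ 2 AddCircle.haarAddCircle :=
    MemLp.of_bound hχmeas.aestronglyMeasurable 1 (Filter.Eventually.of_forall hχbd)
  set hχ0 : Lp ℂ 2 (AddCircle.haarAddCircle (T := 1)) := hχLp.toLp χ with hχ0def
  have hdense := span_fourierLp_closure_eq_top (T := 1) (p := 2) (by norm_num)
  have hmem : hχ0 ∈ closure ((Submodule.span ℂ (Set.range (fourierLp (T:=1) 2))) : Set _) := by
    rw [← Submodule.topologicalClosure_coe, hdense]; trivial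
  obtain ⟨u, hu_mem, hu_tend⟩ := mem_closure_iff_seq_limit.mp hmem
  have hrep : ∀ j, ∃ c : ℤ →₀ ℂ, (c.sum fun i a => a • fourierLp (T:=1) 2 i) = u j :=
    fun j => Finsupp.mem_span_range_iff_exists_finsupp.mp (hu_mem j)
  choose c hc using hrep
  set Q : ℕ → AddCircle (1:ℝ) → ℂ :=
    fun j x => ∑ i ∈ (c j).support, c j i • fourier i x with hQdef
  have hQcont : ∀ j, Continuous (Q j) := by
    intro j
    exact continuous_finset_sum _ fun i _ => by fun_prop
  have hQcoe : ∀ j, ⇑(u j) =ᵐ[AddCircle.haarAddCircle (T:=1)] Q j := by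
    intro j
    rw [← hc j]
    refine (Lp_coeFn_finset_sum ((c j).support) (fun i => c j i • fourierLp (T:=1) 2 i)).trans ?_
    have hterm : ∀ i : ℤ, ⇑(c j i • fourierLp (T:=1) 2 i)
        =ᵐ[AddCircle.haarAddCircle (T:=1)] fun x => c j i • fourier i x := by
      intro i
      refine (Lp.coeFn_smul (c j i) (fourierLp (T:=1) 2 i)).trans ?_
      filter_upwards [coeFn_fourierLp (T:=1) 2 i] with x hx
      simp only [Pi.smul_apply]
      rw [hx]
    filter_upwards [ae_all_iff.2 hterm] with x hx
    simp only [hQdef]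
    exact Finset.sum_congr rfl fun i _ => hx i
  have hQP : ∀ j (t : ℝ), Q j ((t : ℝ) : AddCircle (1:ℝ)) = trigPoly ((c j).support) (c j) t := by
    intro j t
    simp only [hQdef, trigPoly]
    refine Finset.sum_congr rfl fun i _ => ?_
    rw [fourier_coe_apply, smul_eq_mul]
    congr 1
    push_cast
    ring
  haveI : Fact ((1:ENNReal) ≤ 2) := ⟨one_le_two⟩
  have htm := tendstoInMeasure_of_tendsto_Lp hu_tend
  obtain ⟨φ, hφmono, hφae⟩ := htm.exists_seq_tendsto_ae
  have hae_circle : ∀ᵐ x ∂(AddCircle.haarAddCircle (T:=1)),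
      Filter.Tendsto (fun k => Q (φ k) x) Filter.atTop (nhds (χ x)) := by
    filter_upwards [hφae, hχLp.coeFn_toLp, ae_all_iff.2 fun k => hQcoe (φ k)] with x h1 h2 h3
    rw [← h2]
    exact h1.congr fun k => h3 k
  have hae_real : ∀ᵐ t ∂(volume.restrict (Ioc (0:ℝ) 1)),
      Filter.Tendsto (fun k => trigPoly ((c (φ k)).support) (c (φ k)) t) Filter.atTop
        (nhds (χ ((t : ℝ) : AddCircle (1:ℝ)))) := by
    filter_upwards [hmp.quasiMeasurePreserving.ae hae_circle] with t ht
    exact ht.congr fun k => hQP (φ k) t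
  have hFmeas := periodization_aemeasurable f hf
  -- pointwise liminf bound and Fatou
  have key1 : ∫⁻ t in Ioc (0:ℝ) 1, E.indicator (fun _ => (1:ENNReal)) t * periodization f t
      ≤ Filter.atTop.liminf (fun k => ∫⁻ t in Ioc (0:ℝ) 1,
          (‖trigPoly ((c (φ k)).support) (c (φ k)) t‖₊ : ENNReal) ^ 2 * periodization f t) := by
    refine le_trans (lintegral_mono_ae ?_) (lintegral_liminf_le' ?_)
    · filter_upwards [hae_real, ae_restrict_mem measurableSet_Ioc] with t htend htIoc
      have hχt : χ ((t : ℝ) : AddCircle (1:ℝ)) = E.indicator 1 t := hχcoe t htIoc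
      rw [hχt] at htend
      have htend2 : Filter.Tendsto
          (fun k => (‖trigPoly ((c (φ k)).support) (c (φ k)) t‖₊ : ENNReal) ^ 2)
          Filter.atTop (nhds (E.indicator (fun _ => (1:ENNReal)) t)) := by
        have h := tendsto_nnnorm_sq htend
        convert h using 2
        by_cases htE : t ∈ E <;> simp [Set.indicator_apply, htE]
      rcases eq_or_ne (periodization f t) ⊤ with hFt | hFt
      · by_cases htE : t ∈ E
        · have hev : ∀ᶠ k in Filter.atTop,
              (‖trigPoly ((c (φ k)).support) (c (φ k)) t‖₊ : ENNReal) ^ 2 * periodization f t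
                = ⊤ := by
            have hev1 := htend2.eventually (lt_mem_nhds
              (show (1/2 : ENNReal) < E.indicator (fun _ => (1:ENNReal)) t by
                simp [Set.indicator_apply, htE]))
            filter_upwards [hev1] with k hk
            rw [hFt, ENNReal.mul_top]
            intro h0
            rw [h0] at hk
            exact absurd hk (by simp)
          have : Filter.atTop.liminf (fun k =>
              (‖trigPoly ((c (φ k)).support) (c (φ k)) t‖₊ : ENNReal) ^ 2 * periodization f t)
              = ⊤ := by
            rw [Filter.liminf_congr hev, Filter.liminf_const]
          rw [this]
          exact le_top
        · simp [Set.indicator_apply, htE]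
      · have hmul := ENNReal.Tendsto.mul_const htend2 (Or.inr hFt)
        rw [← hmul.liminf_eq]
    · intro k
      exact (((trigPoly_continuous _ _).measurable.nnnorm.coe_nnreal_ennreal.pow_const
        2).aemeasurable.restrict).mul hFmeas.restrict
  -- bound each term using the hypothesis and identify the coefficient sum with ‖u j‖²
  have hBk : ∀ j, ∫⁻ t in Ioc (0:ℝ) 1,
      (‖trigPoly ((c j).support) (c j) t‖₊ : ENNReal) ^ 2 * periodization f t
      ≤ ENNReal.ofReal (C ^ 2) * ENNReal.ofReal (‖u j‖ ^ 2) := by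
    intro j
    have h1 := H ((c j).support) (c j)
    rw [key_identity f hf] at h1
    have h3 : ∫⁻ t in Ioc (0:ℝ) 1, (‖trigPoly ((c j).support) (c j) t‖₊ : ENNReal) ^ 2
        = ∫⁻ x, (‖Q j x‖₊ : ENNReal) ^ 2 ∂(AddCircle.haarAddCircle (T:=1)) := by
      rw [← hmp.lintegral_comp ((hQcont j).measurable.nnnorm.coe_nnreal_ennreal.pow_const 2)]
      exact lintegral_congr fun t => by rw [hQP]
    have h4 : ∫⁻ x, (‖Q j x‖₊ : ENNReal) ^ 2 ∂(AddCircle.haarAddCircle (T:=1))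
        = ∫⁻ x, (‖(u j) x‖₊ : ENNReal) ^ 2 ∂(AddCircle.haarAddCircle (T:=1)) := by
      refine lintegral_congr_ae ?_
      filter_upwards [hQcoe j] with x hx
      rw [hx]
    have h2 : (∑ n ∈ (c j).support, (‖(c j) n‖₊ : ENNReal) ^ 2)
        = ENNReal.ofReal (‖u j‖ ^ 2) := by
      rw [← lintegral_trigPoly_sq, h3, h4, lintegral_nnnorm_sq_eq]
    rw [h2] at h1
    exact h1
  have hval : ENNReal.ofReal (‖hχ0‖ ^ 2) = volume E := by
    rw [← lintegral_nnnorm_sq_eq AddCircle.haarAddCircle hχ0]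
    have hcoe2 : ∫⁻ x, (‖hχ0 x‖₊ : ENNReal) ^ 2 ∂(AddCircle.haarAddCircle (T:=1))
        = ∫⁻ x, (‖χ x‖₊ : ENNReal) ^ 2 ∂(AddCircle.haarAddCircle (T:=1)) := by
      refine lintegral_congr_ae ?_
      filter_upwards [hχLp.coeFn_toLp] with x hx
      rw [hx]
    rw [hcoe2, ← hmp.lintegral_comp (hχmeas.nnnorm.coe_nnreal_ennreal.pow_const 2)]
    have hpt : ∀ᵐ t ∂(volume.restrict (Ioc (0:ℝ) 1)),
        (‖χ ((t : ℝ) : AddCircle (1:ℝ))‖₊ : ENNReal) ^ 2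
          = E.indicator (fun _ => (1:ENNReal)) t := by
      filter_upwards [ae_restrict_mem measurableSet_Ioc] with t ht
      rw [hχcoe t ht]
      by_cases htE : t ∈ E <;> simp [Set.indicator_apply, htE]
    rw [lintegral_congr_ae hpt, lintegral_indicator hE]
    simp only [lintegral_const, one_mul]
    rw [Measure.restrict_restrict hE, Measure.restrict_apply_univ,
      Set.inter_eq_left.2 hEsub]
  have hlim : Filter.Tendsto
      (fun k => ENNReal.ofReal (C ^ 2) * ENNReal.ofReal (‖u (φ k)‖ ^ 2)) Filter.atTop
      (nhds (ENNReal.ofReal (C ^ 2) * volume E)) := by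
    have hnorm : Filter.Tendsto (fun k => ‖u (φ k)‖) Filter.atTop (nhds ‖hχ0‖) :=
      (continuous_norm.tendsto _).comp (hu_tend.comp (hφmono.tendsto_atTop))
    have h5 : Filter.Tendsto (fun k => ENNReal.ofReal (‖u (φ k)‖ ^ 2)) Filter.atTop
        (nhds (ENNReal.ofReal (‖hχ0‖ ^ 2))) :=
      (ENNReal.continuous_ofReal.tendsto _).comp (hnorm.pow 2)
    rw [← hval]
    exact ENNReal.Tendsto.const_mul h5 (Or.inr ENNReal.ofReal_ne_top)
  have final : ∫⁻ t in Ioc (0:ℝ) 1, E.indicator (fun _ => (1:ENNReal)) t * periodization f t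
      ≤ ENNReal.ofReal (C ^ 2) * volume E := by
    refine key1.trans ?_
    rw [← hlim.liminf_eq]
    exact Filter.liminf_le_liminf (Filter.Eventually.of_forall fun k => hBk (φ k))
  calc ∫⁻ t in E, periodization f t
      = ∫⁻ t in Ioc (0:ℝ) 1, E.indicator (fun _ => (1:ENNReal)) t * periodization f t := by
        have : ∀ t, E.indicator (fun _ => (1:ENNReal)) t * periodization f t
            = E.indicator (periodization f) t := by
          intro t
          by_cases htE : t ∈ E <;> simp [Set.indicator_apply, htE]
        rw [lintegral_congr this, lintegral_indicator hE,
          Measure.restrict_restrict hE, Set.inter_eq_left.2 hEsub]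
    _ ≤ ENNReal.ofReal (C ^ 2) * volume E := final

lemma ae_periodization_le
    (f : ℝ → ℂ) (hf : AEStronglyMeasurable f volume) (C : ℝ)
    (H : ∀ E : Set ℝ, MeasurableSet E → E ⊆ Ioc (0:ℝ) 1 →
      ∫⁻ t in E, periodization f t ≤ ENNReal.ofReal (C ^ 2) * volume E) :
    ∀ᵐ t ∂(volume.restrict (Ioc (0:ℝ) 1)), periodization f t ≤ ENNReal.ofReal (C ^ 2) := by
  have hFm := periodization_aemeasurable f hf
  set F' := hFm.mk (periodization f) with hF'def
  have hF'meas : Measurable F' := hFm.measurable_mk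
  have heq : periodization f =ᵐ[volume] F' := hFm.ae_eq_mk
  set c := ENNReal.ofReal (C ^ 2) with hcdef
  set E : ℕ → Set ℝ := fun n => Ioc (0:ℝ) 1 ∩ {t | c + (n : ENNReal)⁻¹ ≤ F' t} with hEdef
  have hEmeas : ∀ n, MeasurableSet (E n) :=
    fun n => measurableSet_Ioc.inter (hF'meas measurableSet_Ici)
  have hEsub : ∀ n, E n ⊆ Ioc (0:ℝ) 1 := fun n => Set.inter_subset_left
  have hEnull : ∀ n, volume (E n) = 0 := by
    intro n
    by_contra hne
    have hvle : volume (E n) ≤ 1 := by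
      calc volume (E n) ≤ volume (Ioc (0:ℝ) 1) := measure_mono (hEsub n)
        _ = 1 := by simp
    have hlow : (c + (n : ENNReal)⁻¹) * volume (E n) ≤ ∫⁻ t in E n, periodization f t := by
      rw [← setLIntegral_const (E n) (c + (n : ENNReal)⁻¹)]
      have heqr : ∀ᵐ t ∂(volume.restrict (E n)), periodization f t = F' t :=
        ae_restrict_of_ae heq
      refine lintegral_mono_ae ?_
      filter_upwards [heqr, ae_restrict_mem (hEmeas n)] with t ht htmem
      rw [ht]
      exact htmem.2
    have hup := H (E n) (hEmeas n) (hEsub n)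
    have hfin : c * volume (E n) ≠ ⊤ :=
      ENNReal.mul_ne_top ENNReal.ofReal_ne_top (lt_of_le_of_lt hvle (by norm_num)).ne
    have hpos : (n : ENNReal)⁻¹ * volume (E n) ≠ 0 := by
      apply mul_ne_zero _ hne
      simp [ENNReal.inv_ne_zero]
    have : c * volume (E n) < (c + (n : ENNReal)⁻¹) * volume (E n) := by
      rw [add_mul]
      exact ENNReal.lt_add_right hfin hpos
    exact absurd (le_trans hlow hup) (not_le.2 this)
  have hnull : volume (⋃ n : ℕ, E n) = 0 := measure_iUnion_null hEnull
  have h1 : ∀ᵐ t ∂volume, t ∉ ⋃ n : ℕ, E n := compl_mem_ae_iff.2 hnull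
  filter_upwards [ae_restrict_of_ae h1, ae_restrict_mem measurableSet_Ioc,
    ae_restrict_of_ae heq] with t ht hIoc heqt
  rw [heqt]
  by_contra hgt
  push_neg at hgt
  obtain ⟨r, hr0, hr⟩ := (ENNReal.lt_iff_exists_add_pos_lt).1 hgt
  obtain ⟨n, hn⟩ := ENNReal.exists_inv_nat_lt (show (r : ENNReal) ≠ 0 by exact_mod_cast hr0.ne')
  refine ht (Set.mem_iUnion.2 ⟨n, hIoc, ?_⟩)
  exact le_trans (add_le_add_right hn.le c) hr.le

/-- For `f ∈ L²(ℝ;ℂ)`, `fₙ(t) = e^{2πint} f(t)` and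
`F(t) = ∑_{k∈ℤ} |f(t+k)|²`: for every `C > 0`, the upper bound
`‖∑ₙ aₙ fₙ‖²_{L²(ℝ)} ≤ C² ∑ₙ |aₙ|²` holds for all finitely supported `(aₙ)` if and only if
`ess sup_{t ∈ (0,1)} F(t) ≤ C²`. In particular, `(fₙ)` is a Hilbert sequence in `L²(ℝ)`
iff `ess sup F < ∞` (and the optimal Hilbert constant `C_H` satisfies `C_H² = ess sup F`). -/
theorem stochastic_datko_pazy_stmt9
    (f : ℝ → ℂ) (hf : MemLp f 2 volume) :
    (∀ C : ℝ, 0 < C →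
      ((∀ (s : Finset ℤ) (a : ℤ → ℂ),
          ∫⁻ t : ℝ, (‖∑ n ∈ s, a n * modulated f n t‖₊ : ENNReal) ^ 2
            ≤ ENNReal.ofReal (C ^ 2) * ∑ n ∈ s, (‖a n‖₊ : ENNReal) ^ 2) ↔
        essSup (periodization f) (volume.restrict (Set.Ioo (0 : ℝ) 1))
          ≤ ENNReal.ofReal (C ^ 2))) ∧
    ((∃ C : ℝ, 0 < C ∧ ∀ (s : Finset ℤ) (a : ℤ → ℂ),
        ∫⁻ t : ℝ, (‖∑ n ∈ s, a n * modulated f n t‖₊ : ENNReal) ^ 2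
          ≤ ENNReal.ofReal (C ^ 2) * ∑ n ∈ s, (‖a n‖₊ : ENNReal) ^ 2) ↔
      essSup (periodization f) (volume.restrict (Set.Ioo (0 : ℝ) 1)) < ⊤) := by
  have hmeas := hf.aestronglyMeasurable
  have hIooIoc : volume.restrict (Set.Ioo (0:ℝ) 1) = volume.restrict (Set.Ioc (0:ℝ) 1) :=
    Measure.restrict_congr_set Ioo_ae_eq_Ioc
  have main : ∀ C : ℝ, 0 < C →
      ((∀ (s : Finset ℤ) (a : ℤ → ℂ),
          ∫⁻ t : ℝ, (‖∑ n ∈ s, a n * modulated f n t‖₊ : ENNReal) ^ 2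
            ≤ ENNReal.ofReal (C ^ 2) * ∑ n ∈ s, (‖a n‖₊ : ENNReal) ^ 2) ↔
        essSup (periodization f) (volume.restrict (Set.Ioo (0 : ℝ) 1))
          ≤ ENNReal.ofReal (C ^ 2)) := by
    intro C hC
    constructor
    · intro H
      rw [hIooIoc]
      exact essSup_le_of_ae_le _ (ae_periodization_le f hmeas C
        (fun E hE hEsub => setLIntegral_periodization_le f hmeas C H E hE hEsub))
    · intro hess s a
      rw [hIooIoc] at hess
      refine hilbert_of_ae_le f hmeas ?_ s a
      have h := ae_le_essSup (μ := volume.restrict (Set.Ioc (0:ℝ) 1)) (f := periodization f)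
      filter_upwards [h] with t ht
      exact le_trans ht hess
  refine ⟨main, ?_⟩
  constructor
  · rintro ⟨C, hC, H⟩
    exact lt_of_le_of_lt ((main C hC).1 H) ENNReal.ofReal_lt_top
  · intro hlt
    set M := essSup (periodization f) (volume.restrict (Set.Ioo (0:ℝ) 1)) with hMdef
    refine ⟨Real.sqrt M.toReal + 1, by positivity, ?_⟩
    refine (main _ (by positivity)).2 ?_
    have h1 : M.toReal ≤ (Real.sqrt M.toReal + 1) ^ 2 := by
      have h0 : 0 ≤ Real.sqrt M.toReal := Real.sqrt_nonneg _
      nlinarith [Real.sq_sqrt (ENNReal.toReal_nonneg (a := M))]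
    calc M = ENNReal.ofReal M.toReal := (ENNReal.ofReal_toReal hlt.ne).symm
      _ ≤ ENNReal.ofReal ((Real.sqrt M.toReal + 1) ^ 2) := ENNReal.ofReal_le_ofReal h1

end
end

section
/- Let δ > 0, σ ∈ [δ/2, 3δ/2], and ρ ∈ [0,1). For n ∈ ℤ define gₙ : (0,∞) → ℂ by gₙ(t) = e^{-σt + i(n+ρ)δt}, so gₙ ∈ L²(0,∞;ℂ). Then, with C := 2π e^{2π}/(e^{2π} - 1), for every finitely supported family (cₙ)_{n∈ℤ} of complex numbers, ‖Σ_{n∈ℤ} cₙ gₙ‖²_{L²(0,∞)} ≤ (C/δ) Σ_{n∈ℤ} |cₙ|²; that is, (gₙ)_{n∈ℤ} is a Hilbert sequence in L²(0,∞) with constant at most (C/δ)^{1/2}. -/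
open MeasureTheory Complex Set

noncomputable section

/-- The functions `gₙ(t) = e^{-σt + i(n+ρ)δt}` on `(0,∞)`. -/
def expFun (σ δ ρ : ℝ) (n : ℤ) (t : ℝ) : ℂ :=
  Complex.exp ((-(σ : ℂ) + ((n : ℝ) + ρ) * δ * Complex.I) * t)

lemma orth (δ : ℝ) (hδ : 0 < δ) (k : ℤ) :
    ∫ t in (0:ℝ)..(2 * Real.pi / δ), Complex.exp ((k : ℂ) * δ * I * t)
      = if k = 0 then ((2 * Real.pi / δ : ℝ) : ℂ) else 0 := by
  rcases eq_or_ne k 0 with hk | hk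
  · simp [hk]
  · have hc : (k : ℂ) * δ * I ≠ 0 := by
      simp [Complex.ofReal_ne_zero, hδ.ne', Complex.I_ne_zero, hk]
    rw [integral_exp_mul_complex hc, if_neg hk]
    have h1 : (k : ℂ) * δ * I * ((2 * Real.pi / δ : ℝ) : ℂ) = (k : ℂ) * (2 * Real.pi * I) := by
      have : (δ:ℂ) ≠ 0 := by simp [hδ.ne']
      push_cast
      field_simp
    rw [h1, Complex.exp_int_mul_two_pi_mul_I]
    simp

lemma hIc (δ : ℝ) (hδ : 0 < δ) (s : Finset ℤ) (c : ℤ → ℂ) :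
    (∫ t in (0:ℝ)..(2 * Real.pi / δ), (∑ n ∈ s, c n * Complex.exp ((n : ℂ) * δ * I * t))
        * (starRingEnd ℂ) (∑ n ∈ s, c n * Complex.exp ((n : ℂ) * δ * I * t)))
      = ((2 * Real.pi / δ : ℝ) : ℂ) * ∑ n ∈ s, ((‖c n‖ : ℂ)) ^ 2 := by
  have hce : ∀ k : ℤ, Continuous fun t : ℝ => Complex.exp ((k : ℂ) * δ * I * t) :=
    fun k => Complex.continuous_exp.comp (by fun_prop)
  have hpt : ∀ t : ℝ, (∑ n ∈ s, c n * Complex.exp ((n : ℂ) * δ * I * t))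
        * (starRingEnd ℂ) (∑ n ∈ s, c n * Complex.exp ((n : ℂ) * δ * I * t))
      = ∑ n ∈ s, ∑ m ∈ s, (c n * (starRingEnd ℂ) (c m))
          * Complex.exp (((n - m : ℤ) : ℂ) * δ * I * t) := by
    intro t
    simp only [map_sum, map_mul, Finset.sum_mul_sum]
    refine Finset.sum_congr rfl fun n _ => Finset.sum_congr rfl fun m _ => ?_
    have hconj : (starRingEnd ℂ) (Complex.exp ((m : ℂ) * δ * I * t))
        = Complex.exp (-((m : ℂ) * δ * I * t)) := by
      rw [← Complex.exp_conj]
      congr 1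
      simp [Complex.conj_I]
    rw [hconj, mul_mul_mul_comm, ← Complex.exp_add]
    congr 1
    push_cast
    ring
  rw [intervalIntegral.integral_congr (fun t _ => hpt t)]
  rw [intervalIntegral.integral_finset_sum (μ := volume) (a := 0) (b := 2 * Real.pi / δ)
    (f := fun n t => ∑ m ∈ s, (c n * (starRingEnd ℂ) (c m))
      * Complex.exp (((n - m : ℤ) : ℂ) * δ * I * t))
    (fun n _ => (continuous_finset_sum s fun m _ =>
      continuous_const.mul (hce (n - m))).intervalIntegrable _ _)]
  calc (∑ n ∈ s, ∫ t in (0:ℝ)..(2 * Real.pi / δ), ∑ m ∈ s, (c n * (starRingEnd ℂ) (c m))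
            * Complex.exp (((n - m : ℤ) : ℂ) * δ * I * t))
      = ∑ n ∈ s, ∑ m ∈ s, (c n * (starRingEnd ℂ) (c m))
          * (if n - m = 0 then ((2 * Real.pi / δ : ℝ) : ℂ) else 0) := by
        refine Finset.sum_congr rfl fun n _ => ?_
        rw [intervalIntegral.integral_finset_sum (μ := volume) (a := 0) (b := 2 * Real.pi / δ)
          (f := fun m t => (c n * (starRingEnd ℂ) (c m))
            * Complex.exp (((n - m : ℤ) : ℂ) * δ * I * t))
          (fun m _ => ((continuous_const.mul (hce (n - m))).intervalIntegrable _ _))]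
        refine Finset.sum_congr rfl fun m _ => ?_
        rw [intervalIntegral.integral_const_mul, orth δ hδ (n - m)]
    _ = ∑ n ∈ s, (c n * (starRingEnd ℂ) (c n)) * ((2 * Real.pi / δ : ℝ) : ℂ) := by
        refine Finset.sum_congr rfl fun n hn => ?_
        rw [Finset.sum_eq_single n]
        · simp
        · intro m hm hmn
          rw [if_neg (by omega), mul_zero]
        · exact fun hns => absurd hn hns
    _ = ((2 * Real.pi / δ : ℝ) : ℂ) * ∑ n ∈ s, ((‖c n‖ : ℂ)) ^ 2 := by
        rw [Finset.mul_sum]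
        refine Finset.sum_congr rfl fun n _ => ?_
        rw [Complex.mul_conj, mul_comm]
        congr 1
        rw [Complex.normSq_eq_norm_sq, Complex.ofReal_pow]

lemma hsq (δ : ℝ) (hδ : 0 < δ) (s : Finset ℤ) (c : ℤ → ℂ) :
    ∫ t in (0:ℝ)..(2 * Real.pi / δ), ‖∑ n ∈ s, c n * Complex.exp ((n : ℂ) * δ * I * t)‖ ^ 2
      = (2 * Real.pi / δ) * ∑ n ∈ s, ‖c n‖ ^ 2 := by
  have hT : (0:ℝ) ≤ 2 * Real.pi / δ := by positivity
  have hcont : Continuous fun t : ℝ => ∑ n ∈ s, c n * Complex.exp ((n : ℂ) * δ * I * t) :=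
    continuous_finset_sum s fun n _ =>
      continuous_const.mul (Complex.continuous_exp.comp (by fun_prop))
  have hre : ∀ t : ℝ, ‖∑ n ∈ s, c n * Complex.exp ((n : ℂ) * δ * I * t)‖ ^ 2
      = ((∑ n ∈ s, c n * Complex.exp ((n : ℂ) * δ * I * t))
        * (starRingEnd ℂ) (∑ n ∈ s, c n * Complex.exp ((n : ℂ) * δ * I * t))).re := by
    intro t
    rw [Complex.mul_conj]
    simp [Complex.normSq_eq_norm_sq, ← Complex.ofReal_pow]
  have hint2 : IntegrableOn (fun t : ℝ => (∑ n ∈ s, c n * Complex.exp ((n : ℂ) * δ * I * t))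
      * (starRingEnd ℂ) (∑ n ∈ s, c n * Complex.exp ((n : ℂ) * δ * I * t)))
      (Ioc (0:ℝ) (2 * Real.pi / δ)) volume :=
    (hcont.mul (Complex.continuous_conj.comp hcont)).integrableOn_Ioc

  calc (∫ t in (0:ℝ)..(2 * Real.pi / δ), ‖∑ n ∈ s, c n * Complex.exp ((n : ℂ) * δ * I * t)‖ ^ 2)
      = ∫ t in (0:ℝ)..(2 * Real.pi / δ), ((∑ n ∈ s, c n * Complex.exp ((n : ℂ) * δ * I * t))
          * (starRingEnd ℂ) (∑ n ∈ s, c n * Complex.exp ((n : ℂ) * δ * I * t))).re := by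
        exact intervalIntegral.integral_congr fun t _ => hre t
    _ = (∫ t in (0:ℝ)..(2 * Real.pi / δ), (∑ n ∈ s, c n * Complex.exp ((n : ℂ) * δ * I * t))
          * (starRingEnd ℂ) (∑ n ∈ s, c n * Complex.exp ((n : ℂ) * δ * I * t))).re := by
        rw [intervalIntegral.integral_of_le hT, intervalIntegral.integral_of_le hT]
        simp only [← RCLike.re_eq_complex_re]
        rw [integral_re hint2]
    _ = (2 * Real.pi / δ) * ∑ n ∈ s, ‖c n‖ ^ 2 := by
        rw [hIc δ hδ s c]
        have : ((2 * Real.pi / δ : ℝ) : ℂ) * ∑ n ∈ s, ((‖c n‖ : ℂ)) ^ 2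
            = (((2 * Real.pi / δ) * ∑ n ∈ s, ‖c n‖ ^ 2 : ℝ) : ℂ) := by
          push_cast
          ring
        rw [this, Complex.ofReal_re]

lemma expFun_norm_sq (σ δ ρ : ℝ) (n : ℤ) (t : ℝ) :
    ‖expFun σ δ ρ n t‖ ^ 2 = Real.exp (-(2 * σ) * t) := by
  rw [expFun, Complex.norm_exp]
  have hre : ((-(σ : ℂ) + ((n : ℝ) + ρ) * δ * Complex.I) * t).re = -σ * t := by
    simp [Complex.add_re, Complex.mul_re, Complex.mul_im]
  rw [hre, ← Real.exp_nat_mul]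
  norm_num
  ring_nf

lemma expFun_cont (σ δ ρ : ℝ) (n : ℤ) : Continuous (expFun σ δ ρ n) :=
  Complex.continuous_exp.comp (by fun_prop)

lemma expFun_split (σ δ ρ : ℝ) (n : ℤ) (t : ℝ) :
    expFun σ δ ρ n t
      = Complex.exp ((-(σ : ℂ) + ρ * δ * I) * t) * Complex.exp ((n : ℂ) * δ * I * t) := by
  rw [expFun, ← Complex.exp_add]
  congr 1
  push_cast
  ring

/-- Let `δ > 0`, `σ ∈ [δ/2, 3δ/2]`, `ρ ∈ [0,1)`, and
`gₙ(t) = e^{-σt + i(n+ρ)δt}` for `t ∈ (0,∞)`. Then `gₙ ∈ L²(0,∞;ℂ)` and, with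
`C = 2π e^{2π}/(e^{2π}-1)`, for every finitely supported family `(cₙ)_{n∈ℤ}` of complex
numbers, `‖∑ₙ cₙ gₙ‖²_{L²(0,∞)} ≤ (C/δ) ∑ₙ |cₙ|²`; that is, `(gₙ)_{n∈ℤ}` is a Hilbert
sequence in `L²(0,∞)` with constant at most `(C/δ)^{1/2}`. -/
theorem stochastic_datko_pazy_stmt12
    (δ σ ρ : ℝ) (hδ : 0 < δ) (hσ : σ ∈ Set.Icc (δ / 2) (3 * δ / 2))
    (hρ : ρ ∈ Set.Ico (0 : ℝ) 1) :
    (∀ n : ℤ, MemLp (expFun σ δ ρ n) 2 (volume.restrict (Set.Ioi (0 : ℝ)))) ∧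
    ∀ (s : Finset ℤ) (c : ℤ → ℂ),
      ∫ t in Set.Ioi (0 : ℝ), ‖∑ n ∈ s, c n * expFun σ δ ρ n t‖ ^ 2
        ≤ ((2 * Real.pi * Real.exp (2 * Real.pi) / (Real.exp (2 * Real.pi) - 1)) / δ)
            * ∑ n ∈ s, ‖c n‖ ^ 2 := by
  have hσpos : 0 < σ := lt_of_lt_of_le (by linarith) hσ.1
  have h2σ : 0 < 2 * σ := by linarith
  constructor
  · intro n
    have hmeas : AEStronglyMeasurable (expFun σ δ ρ n) (volume.restrict (Set.Ioi (0 : ℝ))) :=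
      (expFun_cont σ δ ρ n).aestronglyMeasurable
    rw [memLp_two_iff_integrable_sq_norm hmeas]
    have hint : IntegrableOn (fun t : ℝ => Real.exp (-(2 * σ) * t)) (Set.Ioi 0) volume :=
      exp_neg_integrableOn_Ioi 0 h2σ
    exact hint.congr (ae_of_all _ fun t => (expFun_norm_sq σ δ ρ n t).symm)
  · intro s c
    set T : ℝ := 2 * Real.pi / δ with hTdef
    have hTpos : 0 < T := by positivity
    set S : ℝ := ∑ n ∈ s, ‖c n‖ ^ 2 with hSdef
    have hSnn : 0 ≤ S := Finset.sum_nonneg fun n _ => by positivity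
    set r : ℝ := Real.exp (-(2 * σ) * T) with hrdef
    have hr0 : 0 ≤ r := (Real.exp_pos _).le
    have hr1 : r < 1 := by
      rw [hrdef, Real.exp_lt_one_iff]
      nlinarith
    set h : ℝ → ℂ := fun t => ∑ n ∈ s, c n * Complex.exp ((n : ℂ) * δ * I * t) with hhdef
    set f : ℝ → ℂ := fun t => ∑ n ∈ s, c n * expFun σ δ ρ n t with hfdef
    have hhcont : Continuous h :=
      continuous_finset_sum s fun n _ =>
        continuous_const.mul (Complex.continuous_exp.comp (by fun_prop))
    have hfcont : Continuous f :=
      continuous_finset_sum s fun n _ => continuous_const.mul (expFun_cont σ δ ρ n)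
    -- pointwise splitting
    have hsplit : ∀ t : ℝ, ‖f t‖ ^ 2 = Real.exp (-(2 * σ) * t) * ‖h t‖ ^ 2 := by
      intro t
      have : f t = Complex.exp ((-(σ : ℂ) + ρ * δ * I) * t) * h t := by
        rw [hfdef, hhdef]
        simp only [Finset.mul_sum]
        exact Finset.sum_congr rfl fun n _ => by rw [expFun_split σ δ ρ n t]; ring
      rw [this, norm_mul, mul_pow, Complex.norm_exp]
      have hre : ((-(σ : ℂ) + ρ * δ * I) * t).re = -σ * t := by
        simp [Complex.add_re, Complex.mul_re, Complex.mul_im]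
      rw [hre, ← Real.exp_nat_mul]
      norm_num
      left
      ring_nf
    -- periodicity
    have hper : ∀ (j : ℕ) (t : ℝ), h (t + j * T) = h t := by
      intro j t
      rw [hhdef]
      refine Finset.sum_congr rfl fun n _ => ?_
      congr 1
      have hδTr : δ * T = 2 * Real.pi := by
        rw [hTdef]
        field_simp
      have hc : (δ : ℂ) * (T : ℂ) = 2 * (Real.pi : ℂ) := by
        exact_mod_cast congrArg (Complex.ofReal) hδTr
      have : (n : ℂ) * δ * I * ((t + j * T : ℝ) : ℂ)
          = (n : ℂ) * δ * I * (t : ℝ) + ((n * j : ℤ) : ℂ) * (2 * Real.pi * I) := by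
        push_cast
        linear_combination ((n : ℂ) * j * I) * hc
      rw [this, Complex.exp_add, Complex.exp_int_mul_two_pi_mul_I, mul_one]
    -- sets
    set A : ℕ → Set ℝ := fun j => Ioc ((j : ℝ) * T) (((j : ℝ) + 1) * T) with hAdef
    have hAm : ∀ j, MeasurableSet (A j) := fun j => measurableSet_Ioc
    have hunion : Ioi (0 : ℝ) = ⋃ j : ℕ, A j := by
      ext t
      simp only [mem_Ioi, mem_iUnion, hAdef, mem_Ioc]
      constructor
      · intro ht
        have htT : 0 < t / T := div_pos ht hTpos
        have hc1 : 1 ≤ ⌈t / T⌉₊ := Nat.one_le_ceil_iff.mpr htT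
        refine ⟨⌈t / T⌉₊ - 1, ?_, ?_⟩
        · have hlt : ((⌈t / T⌉₊ : ℝ)) < t / T + 1 := Nat.ceil_lt_add_one htT.le
          have hcast : ((⌈t / T⌉₊ - 1 : ℕ) : ℝ) = (⌈t / T⌉₊ : ℝ) - 1 := by
            push_cast [hc1]
            ring
          rw [hcast]
          exact (lt_div_iff₀ hTpos).mp (by linarith)
        · have hle : t / T ≤ (⌈t / T⌉₊ : ℝ) := Nat.le_ceil _
          have hcast : ((⌈t / T⌉₊ - 1 : ℕ) : ℝ) + 1 = (⌈t / T⌉₊ : ℝ) := by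
            push_cast [hc1]
            ring
          rw [hcast, ← div_le_iff₀ hTpos]
          exact hle
      · rintro ⟨j, hj1, _⟩
        have : (0 : ℝ) ≤ (j : ℝ) * T := by positivity
        linarith
    have hAdisj : Pairwise (Function.onFun Disjoint A) := by
      intro i j hij
      simp only [Function.onFun, hAdef]
      rw [Set.Ioc_disjoint_Ioc]
      rcases lt_or_gt_of_ne hij with hlt | hlt
      · have : ((i : ℝ) + 1) * T ≤ (j : ℝ) * T := by
          have : (i : ℝ) + 1 ≤ (j : ℝ) := by exact_mod_cast hlt
          nlinarith
        calc min (((i : ℝ) + 1) * T) (((j : ℝ) + 1) * T) ≤ ((i : ℝ) + 1) * T :=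
              min_le_left _ _
          _ ≤ (j : ℝ) * T := this
          _ ≤ max ((i : ℝ) * T) ((j : ℝ) * T) := le_max_right _ _
      · have : ((j : ℝ) + 1) * T ≤ (i : ℝ) * T := by
          have : (j : ℝ) + 1 ≤ (i : ℝ) := by exact_mod_cast hlt
          nlinarith
        calc min (((i : ℝ) + 1) * T) (((j : ℝ) + 1) * T) ≤ ((j : ℝ) + 1) * T :=
              min_le_right _ _
          _ ≤ (i : ℝ) * T := this
          _ ≤ max ((i : ℝ) * T) ((j : ℝ) * T) := le_max_left _ _
    -- integrability on Ioi 0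
    have hbound : ∀ t : ℝ, ‖f t‖ ^ 2 ≤ (∑ n ∈ s, ‖c n‖) ^ 2 * Real.exp (-(2 * σ) * t) := by
      intro t
      rw [hsplit t, mul_comm]
      have hh1 : ‖h t‖ ≤ ∑ n ∈ s, ‖c n‖ := by
        rw [hhdef]
        refine le_trans (norm_sum_le _ _) (Finset.sum_le_sum fun n _ => ?_)
        rw [norm_mul]
        have : ‖Complex.exp ((n : ℂ) * δ * I * t)‖ = 1 := by
          rw [Complex.norm_exp]
          have : ((n : ℂ) * δ * I * (t : ℝ)).re = 0 := by
            simp [Complex.mul_re, Complex.mul_im]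
          rw [this, Real.exp_zero]
        rw [this, mul_one]
      have : ‖h t‖ ^ 2 ≤ (∑ n ∈ s, ‖c n‖) ^ 2 := by
        apply pow_le_pow_left₀ (norm_nonneg _) hh1
      exact mul_le_mul_of_nonneg_right this (Real.exp_pos _).le
    have hfint : IntegrableOn (fun t : ℝ => ‖f t‖ ^ 2) (Ioi 0) volume := by
      refine Integrable.mono' ((exp_neg_integrableOn_Ioi 0 h2σ).const_mul
        ((∑ n ∈ s, ‖c n‖) ^ 2)) ?_ ?_
      · exact ((hfcont.norm.pow 2)).aestronglyMeasurable
      · refine ae_of_all _ fun t => ?_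
        have h0 : ‖‖f t‖ ^ 2‖ = ‖f t‖ ^ 2 := abs_of_nonneg (by positivity)
        rw [h0]
        exact hbound t
    -- decompose the integral
    have hdecomp : ∫ t in Ioi (0 : ℝ), ‖f t‖ ^ 2
        = ∑' j : ℕ, ∫ t in A j, ‖f t‖ ^ 2 := by
      rw [hunion] at hfint ⊢
      exact integral_iUnion hAm hAdisj hfint
    -- per-piece bound
    have hpiece : ∀ j : ℕ, (∫ t in A j, ‖f t‖ ^ 2) ≤ r ^ j * (T * S) := by
      intro j
      have hle : (j : ℝ) * T ≤ ((j : ℝ) + 1) * T := by nlinarith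
      have e1 : (∫ t in A j, ‖f t‖ ^ 2)
          = ∫ t in ((j : ℝ) * T)..(((j : ℝ) + 1) * T), ‖f t‖ ^ 2 := by
        rw [intervalIntegral.integral_of_le hle]
      have e2 : (∫ t in ((j : ℝ) * T)..(((j : ℝ) + 1) * T), ‖f t‖ ^ 2)
          = ∫ x in (0 : ℝ)..T, ‖f (x + (j : ℝ) * T)‖ ^ 2 := by
        rw [intervalIntegral.integral_comp_add_right (fun t => ‖f t‖ ^ 2) ((j : ℝ) * T)]
        congr 1
        · ring
        · ring
      have hptw : ∀ x ∈ Icc (0 : ℝ) T, ‖f (x + (j : ℝ) * T)‖ ^ 2 ≤ r ^ j * ‖h x‖ ^ 2 := by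
        intro x hx
        rw [hsplit, hper j x]
        have hre : Real.exp (-(2 * σ) * (x + (j : ℝ) * T)) ≤ r ^ j := by
          rw [hrdef, ← Real.exp_nat_mul]
          apply Real.exp_le_exp.mpr
          have : (0 : ℝ) ≤ 2 * σ * x := by
            have := hx.1
            positivity
          nlinarith
        exact mul_le_mul_of_nonneg_right hre (by positivity)
      have e3 : (∫ x in (0 : ℝ)..T, ‖f (x + (j : ℝ) * T)‖ ^ 2)
          ≤ ∫ x in (0 : ℝ)..T, r ^ j * ‖h x‖ ^ 2 := by
        apply intervalIntegral.integral_mono_on hTpos.le ?_ ?_ hptw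
        · exact ((hfcont.comp (by fun_prop)).norm.pow 2).intervalIntegrable _ _
        · exact (continuous_const.mul (hhcont.norm.pow 2)).intervalIntegrable _ _
      have e4 : (∫ x in (0 : ℝ)..T, r ^ j * ‖h x‖ ^ 2) = r ^ j * (T * S) := by
        rw [intervalIntegral.integral_const_mul, hhdef, hsq δ hδ s c]
      rw [e1, e2]
      rw [e4] at e3
      exact e3
    -- summability and geometric bound
    have hgeo_sum : Summable (fun j : ℕ => r ^ j * (T * S)) :=
      (summable_geometric_of_lt_one hr0 hr1).mul_right _
    have hsumm : Summable (fun j : ℕ => ∫ t in A j, ‖f t‖ ^ 2) := by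
      refine Summable.of_nonneg_of_le (fun j => ?_) hpiece hgeo_sum
      exact setIntegral_nonneg (hAm j) fun t _ => by positivity
    have htsum : (∑' j : ℕ, ∫ t in A j, ‖f t‖ ^ 2) ≤ (1 - r)⁻¹ * (T * S) := by
      calc (∑' j : ℕ, ∫ t in A j, ‖f t‖ ^ 2)
          ≤ ∑' j : ℕ, r ^ j * (T * S) := hsumm.tsum_le_tsum hpiece hgeo_sum
        _ = (1 - r)⁻¹ * (T * S) := by
            rw [tsum_mul_right, tsum_geometric_of_lt_one hr0 hr1]
    -- final constant comparison
    have hE : 1 < Real.exp (2 * Real.pi) := by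
      rw [Real.one_lt_exp_iff]
      positivity
    have hconst : (1 - r)⁻¹ * T
        ≤ (2 * Real.pi * Real.exp (2 * Real.pi) / (Real.exp (2 * Real.pi) - 1)) / δ := by
      have hrle : r ≤ Real.exp (-(2 * Real.pi)) := by
        rw [hrdef, Real.exp_le_exp]
        have hδTr : δ * T = 2 * Real.pi := by
          rw [hTdef]
          field_simp
        have hσ2 : δ ≤ 2 * σ := by linarith [hσ.1]
        nlinarith [mul_le_mul_of_nonneg_right hσ2 hTpos.le]
      have hEpos : 0 < Real.exp (2 * Real.pi) - 1 := by linarith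
      have h1r : 0 < 1 - Real.exp (-(2 * Real.pi)) := by
        have : Real.exp (-(2 * Real.pi)) < 1 := by
          rw [Real.exp_lt_one_iff]
          have := Real.pi_pos
          linarith
        linarith
      have h1rr : 0 < 1 - r := by linarith [lt_of_le_of_lt hrle (by linarith : Real.exp (-(2 * Real.pi)) < 1)]
      have hinv : (1 - r)⁻¹ ≤ (1 - Real.exp (-(2 * Real.pi)))⁻¹ := by
        apply inv_anti₀ h1r
        linarith
      have hinvval : (1 - Real.exp (-(2 * Real.pi)))⁻¹
          = Real.exp (2 * Real.pi) / (Real.exp (2 * Real.pi) - 1) := by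
        rw [Real.exp_neg]
        rw [inv_eq_one_div]
        rw [eq_div_iff hEpos.ne']
        field_simp
      calc (1 - r)⁻¹ * T ≤ (1 - Real.exp (-(2 * Real.pi)))⁻¹ * T :=
            mul_le_mul_of_nonneg_right hinv hTpos.le
        _ = (2 * Real.pi * Real.exp (2 * Real.pi) / (Real.exp (2 * Real.pi) - 1)) / δ := by
            rw [hinvval, hTdef]
            field_simp
    calc ∫ t in Ioi (0 : ℝ), ‖f t‖ ^ 2 = ∑' j : ℕ, ∫ t in A j, ‖f t‖ ^ 2 := hdecomp
      _ ≤ (1 - r)⁻¹ * (T * S) := htsum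
      _ = ((1 - r)⁻¹ * T) * S := by ring
      _ ≤ ((2 * Real.pi * Real.exp (2 * Real.pi) / (Real.exp (2 * Real.pi) - 1)) / δ) * S :=
          mul_le_mul_of_nonneg_right hconst hSnn


end
end

section
/- Let 𝒜 be a complex unital Banach algebra, a ∈ 𝒜, and c > 0. Assume that for every λ ∈ ℂ with Re λ > 0, the element λ·1 - a is invertible in 𝒜 and ‖(λ·1 - a)^{-1}‖ ≤ c / √(Re λ). Then every μ in the spectrum of a satisfies Re μ ≤ -1/(4c²). -/
noncomputable section

/-- Let `𝒜` be a complex unital Banach algebra, `a ∈ 𝒜` and `c > 0`.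
If for every `λ ∈ ℂ` with `Re λ > 0` the element `λ·1 - a` is invertible with
`‖(λ·1 - a)⁻¹‖ ≤ c / √(Re λ)`, then every `μ` in the spectrum of `a` satisfies
`Re μ ≤ -1/(4c²)`. -/
theorem stochastic_datko_pazy_stmt16
    {𝒜 : Type*} [NormedRing 𝒜] [NormedAlgebra ℂ 𝒜] [CompleteSpace 𝒜]
    (a : 𝒜) (c : ℝ) (hc : 0 < c)
    (hinv : ∀ lam : ℂ, 0 < lam.re → ∃ b : 𝒜,
      (algebraMap ℂ 𝒜 lam - a) * b = 1 ∧ b * (algebraMap ℂ 𝒜 lam - a) = 1 ∧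
        ‖b‖ ≤ c / Real.sqrt lam.re) :
    ∀ mu ∈ spectrum ℂ a, mu.re ≤ -(1 / (4 * c ^ 2)) := by
  intro mu hmu
  have hmu_unit : ¬ IsUnit (algebraMap ℂ 𝒜 mu - a) := hmu
  have hre : mu.re ≤ 0 := by
    by_contra h
    push_neg at h
    obtain ⟨b, h1, h2, _⟩ := hinv mu h
    exact hmu_unit ⟨⟨_, b, h1, h2⟩, rfl⟩
  set t : ℝ := 1 / (4 * c ^ 2) with ht
  have ht0 : 0 < t := by positivity
  set lam : ℂ := ⟨t, mu.im⟩ with hlam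
  have hlre : lam.re = t := rfl
  obtain ⟨b, h1, h2, hb⟩ := hinv lam (by rw [hlre]; exact ht0)
  have key : (1 : ℝ) ≤ ‖lam - mu‖ * ‖b‖ := by
    by_contra h
    push_neg at h
    have hw : ‖(lam - mu) • b‖ < 1 := by rw [norm_smul]; exact h
    have hu1 : IsUnit ((1 : 𝒜) - (lam - mu) • b) := (Units.oneSub _ hw).isUnit
    have hu2 : IsUnit (algebraMap ℂ 𝒜 lam - a) := ⟨⟨_, b, h1, h2⟩, rfl⟩
    apply hmu_unit
    have heq : (algebraMap ℂ 𝒜 lam - a) * ((1 : 𝒜) - (lam - mu) • b)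
        = algebraMap ℂ 𝒜 mu - a := by
      rw [mul_sub, mul_one, mul_smul_comm, h1]
      rw [Algebra.algebraMap_eq_smul_one, Algebra.algebraMap_eq_smul_one, sub_smul]
      module
    rw [← heq]
    exact hu2.mul hu1
  have hdiff : lam - mu = ((t - mu.re : ℝ) : ℂ) := by
    apply Complex.ext <;> simp [hlam]
  have hnorm : ‖lam - mu‖ = t - mu.re := by
    rw [hdiff, Complex.norm_real, Real.norm_eq_abs, abs_of_nonneg (by linarith)]
  have hs : Real.sqrt t = 1 / (2 * c) := by
    have h2 : (1 / (2 * c)) ^ 2 = t := by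
      rw [ht, div_pow, one_pow, mul_pow]
      norm_num
    rw [← h2, Real.sqrt_sq (by positivity)]
  rw [hlre, hs] at hb
  have hbpos : (0 : ℝ) ≤ ‖b‖ := norm_nonneg _
  have : (1 : ℝ) ≤ (t - mu.re) * (c / (1 / (2 * c))) := by
    calc (1 : ℝ) ≤ ‖lam - mu‖ * ‖b‖ := key
    _ ≤ (t - mu.re) * (c / (1 / (2 * c))) := by
        rw [hnorm]
        exact mul_le_mul_of_nonneg_left hb (by linarith)
  have hcc : c / (1 / (2 * c)) = 2 * c ^ 2 := by
    field_simp
  rw [hcc, ht] at this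
  have htc : (1 / (4 * c ^ 2)) * (2 * c ^ 2) = 1 / 2 := by
    field_simp
    ring
  have hkey : mu.re * (4 * c ^ 2) ≤ -1 := by nlinarith [this, htc]
  rw [show -(1 / (4 * c ^ 2)) = (-1) / (4 * c ^ 2) by ring,
    le_div_iff₀ (by positivity : (0:ℝ) < 4 * c ^ 2)]
  exact hkey
end
end
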